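/- Let (X,Y) ∼ P_X × P_Y with information density ι of a joint law P_{XY}, let λ ∈ [0,1], M ≥ 1, and define κ_λ(y) = (M·E[exp(λ·ι(X;Y))|Y=y])^{1/(1+λ)} and F = {(x,y) : exp(ι(x;y)) ≤ κ_λ(y)}. Then for each y, both P[(X,y) ∉ F] and sqrt(M^{−1}·E[exp(ι(X;Y))·1{(X,Y)∈F}|Y=y]) are bounded above by M^{−λ/(1+λ)}·(E[exp(λ·ι(X;Y))|Y=y])^{1/(1+λ)}. -/
import Mathlib


open MeasureTheory Real

/-- The core computation of the Gallager-type one-shot soft-covering bound: for fixed `y`,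
`λ ∈ [0,1]`, `M ≥ 1`, threshold `κ = (M · E[exp(λ ι(X;y))])^{1/(1+λ)}` and
`F = {x : exp(ι(x;y)) ≤ κ}`, both `P[X ∉ F]` and
`√(M⁻¹ E[exp(ι(X;y)) 1_F])` are at most
`M^{−λ/(1+λ)} (E[exp(λ ι(X;y))])^{1/(1+λ)}`, where `X ∼ P_X`. -/
theorem stmt19 {α β : Type*} [MeasurableSpace α] [MeasurableSpace β]
    (PX : Measure α) [IsProbabilityMeasure PX]
    (ι : α → β → ℝ) (y : β) (hιmeas : Measurable (fun x => ι x y))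
    (lam : ℝ) (hlam : lam ∈ Set.Icc (0:ℝ) 1) (M : ℝ) (hM : 1 ≤ M)
    (hint : Integrable (fun x => Real.exp (lam * ι x y)) PX)
    (E κ : ℝ) (hE : E = ∫ x, Real.exp (lam * ι x y) ∂PX)
    (hκ : κ = (M * E) ^ ((1 : ℝ) / (1 + lam))) :
    (PX {x | κ < Real.exp (ι x y)}).toReal ≤
        M ^ (-(lam / (1 + lam))) * E ^ ((1 : ℝ) / (1 + lam)) ∧
      Real.sqrt (M⁻¹ *
          ∫ x, Real.exp (ι x y) *
            Set.indicator {x' | Real.exp (ι x' y) ≤ κ} (fun _ => (1:ℝ)) x ∂PX) ≤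
        M ^ (-(lam / (1 + lam))) * E ^ ((1 : ℝ) / (1 + lam)) := by
  obtain ⟨hl0, hl1⟩ := hlam
  have h1l : (0:ℝ) < 1 + lam := by linarith
  have hM0 : (0:ℝ) < M := by linarith
  have hE0 : 0 < E := by rw [hE]; exact integral_exp_pos hint
  have hME : 0 < M * E := mul_pos hM0 hE0
  have hκ0 : 0 < κ := by rw [hκ]; exact Real.rpow_pos_of_pos hME _
  have hRe : M ^ (-(lam / (1 + lam))) * E ^ ((1 : ℝ) / (1 + lam)) =
      Real.exp (Real.log M * (-(lam/(1+lam))) + Real.log E * (1/(1+lam))) := by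
    rw [Real.rpow_def_of_pos hM0, Real.rpow_def_of_pos hE0, Real.exp_add]
  have hR0 : 0 < M ^ (-(lam / (1 + lam))) * E ^ ((1 : ℝ) / (1 + lam)) :=
    mul_pos (Real.rpow_pos_of_pos hM0 _) (Real.rpow_pos_of_pos hE0 _)
  have hκe : κ = Real.exp ((Real.log M + Real.log E) * (1/(1+lam))) := by
    rw [hκ, Real.rpow_def_of_pos hME, Real.log_mul hM0.ne' hE0.ne']
  have hEe : E = Real.exp (Real.log E) := (Real.exp_log hE0).symm
  constructor
  · -- Markov part
    have hsub : {x | κ < Real.exp (ι x y)} ⊆ {x | κ ^ lam ≤ Real.exp (lam * ι x y)} := by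
      intro x hx
      simp only [Set.mem_setOf_eq] at hx ⊢
      calc κ ^ lam ≤ Real.exp (ι x y) ^ lam := Real.rpow_le_rpow hκ0.le hx.le hl0
        _ = Real.exp (lam * ι x y) := by rw [← Real.exp_mul, mul_comm]
    have hmarkov := mul_meas_ge_le_integral_of_nonneg
      (Filter.Eventually.of_forall fun x => (Real.exp_pos _).le) hint (κ ^ lam)
    have hmono : (PX {x | κ < Real.exp (ι x y)}).toReal ≤
        (PX {x | κ ^ lam ≤ Real.exp (lam * ι x y)}).toReal :=
      ENNReal.toReal_mono (measure_ne_top _ _) (measure_mono hsub)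
    have hκl0 : 0 < κ ^ lam := Real.rpow_pos_of_pos hκ0 _
    have h1 : (PX {x | κ ^ lam ≤ Real.exp (lam * ι x y)}).toReal ≤ E / κ ^ lam := by
      rw [le_div_iff₀ hκl0, mul_comm]
      exact hE ▸ hmarkov
    refine (hmono.trans h1).trans_eq ?_
    rw [hRe, hκe, ← Real.exp_mul]
    nth_rewrite 1 [hEe]
    rw [← Real.exp_sub]
    congr 1
    field_simp
    ring
  · -- second part
    have hFmeas : MeasurableSet {x' : α | Real.exp (ι x' y) ≤ κ} :=
      measurableSet_le hιmeas.exp measurable_const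
    set f : α → ℝ := fun x => Real.exp (ι x y) *
      Set.indicator {x' | Real.exp (ι x' y) ≤ κ} (fun _ => (1:ℝ)) x with hf
    set g : α → ℝ := fun x => κ ^ (1 - lam) * Real.exp (lam * ι x y) with hg
    have hgint : Integrable g PX := hint.const_mul _
    have hf0 : ∀ x, 0 ≤ f x := fun x =>
      mul_nonneg (Real.exp_pos _).le (Set.indicator_nonneg (fun _ _ => zero_le_one) x)
    have hfg : ∀ x, f x ≤ g x := by
      intro x
      by_cases hx : Real.exp (ι x y) ≤ κ
      · simp only [hf, hg, Set.indicator_of_mem (show x ∈ {x' | Real.exp (ι x' y) ≤ κ} from hx),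
          mul_one]
        have hsplit : Real.exp (ι x y) = Real.exp ((1-lam) * ι x y) * Real.exp (lam * ι x y) := by
          rw [← Real.exp_add]; ring_nf
        rw [hsplit]
        refine mul_le_mul_of_nonneg_right ?_ (Real.exp_pos _).le
        calc Real.exp ((1-lam) * ι x y) = Real.exp (ι x y) ^ (1-lam) := by
              rw [← Real.exp_mul, mul_comm]
          _ ≤ κ ^ (1-lam) := Real.rpow_le_rpow (Real.exp_pos _).le hx (by linarith)
      · simp only [hf, Set.indicator_of_notMem (show x ∉ {x' | Real.exp (ι x' y) ≤ κ} from hx),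
          mul_zero]
        exact mul_nonneg (Real.rpow_pos_of_pos hκ0 _).le (Real.exp_pos _).le
    have hfmeas : AEStronglyMeasurable f PX :=
      (hιmeas.exp.mul (measurable_const.indicator hFmeas)).aestronglyMeasurable
    have hfint : Integrable f PX := by
      refine hgint.mono' hfmeas (Filter.Eventually.of_forall fun x => ?_)
      rw [Real.norm_eq_abs, abs_of_nonneg (hf0 x)]
      exact hfg x
    have hI : ∫ x, f x ∂PX ≤ κ ^ (1 - lam) * E := by
      have := integral_mono hfint hgint hfg
      rwa [hg, integral_const_mul, ← hE] at this
    have hkey : M⁻¹ * ∫ x, f x ∂PX ≤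
        (M ^ (-(lam / (1 + lam))) * E ^ ((1 : ℝ) / (1 + lam))) ^ 2 := by
      have h2 : M⁻¹ * (κ ^ (1 - lam) * E) =
          (M ^ (-(lam / (1 + lam))) * E ^ ((1 : ℝ) / (1 + lam))) ^ 2 := by
        rw [hRe, sq, ← Real.exp_add, hκe, ← Real.exp_mul]
        nth_rewrite 2 [hEe]
        rw [show M⁻¹ = Real.exp (-Real.log M) by rw [Real.exp_neg, Real.exp_log hM0],
          ← Real.exp_add, ← Real.exp_add]
        congr 1
        field_simp
        ring
      calc M⁻¹ * ∫ x, f x ∂PX ≤ M⁻¹ * (κ ^ (1 - lam) * E) :=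
            mul_le_mul_of_nonneg_left hI (inv_nonneg.mpr hM0.le)
        _ = _ := h2
    calc Real.sqrt (M⁻¹ * ∫ x, f x ∂PX)
        ≤ Real.sqrt ((M ^ (-(lam / (1 + lam))) * E ^ ((1 : ℝ) / (1 + lam))) ^ 2) :=
          Real.sqrt_le_sqrt hkey
      _ = _ := Real.sqrt_sq hR0.le
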